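/- Let s ≥ 2 and let R = {0,…,s−1} × {0,…,s} ⊆ ℤ² be the s × (s+1) rectangle (the horizontal/vertical block for (1,s)-tilings). Then R has exactly three (1,s)-tilings: the all-unit tiling {(q,1) : q ∈ R}; the tiling with one s×s tile at (0,0) together with s unit tiles in the top row; and the tiling with one s×s tile at (0,1) together with s unit tiles in the bottom row. -/
import Mathlib


open Finset

/-- The k×k square of cells with lower-left corner `p`. -/
def sqCells (p : ℤ × ℤ) (k : ℕ) : Finset (ℤ × ℤ) :=
  (Finset.range k ×ˢ Finset.range k).image fun ij => (p.1 + ij.1, p.2 + ij.2)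

/-- `T` is an (m,s)-tiling of the finite region `R`. -/
def IsTiling (m s : ℕ) (R : Finset (ℤ × ℤ)) (T : Finset ((ℤ × ℤ) × ℕ)) : Prop :=
  (∀ t ∈ T, t.2 = m ∨ t.2 = s) ∧
  (∀ t ∈ T, ∀ t' ∈ T, t ≠ t' → Disjoint (sqCells t.1 t.2) (sqCells t'.1 t'.2)) ∧
  T.biUnion (fun t => sqCells t.1 t.2) = R

/-- The a×b rectangular region in ℤ². -/
def rectRegion (a b : ℕ) : Finset (ℤ × ℤ) :=
  (Finset.range a ×ˢ Finset.range b).image fun ij => ((ij.1 : ℤ), (ij.2 : ℤ))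

/-- The all-unit tiling of the s×(s+1) rectangle. -/
def blockUnits (s : ℕ) : Finset ((ℤ × ℤ) × ℕ) :=
  (rectRegion s (s + 1)).image fun q => (q, 1)

/-- One s×s tile at (0,0) with s unit tiles in the top row. -/
def blockBig0 (s : ℕ) : Finset ((ℤ × ℤ) × ℕ) :=
  insert (((0 : ℤ), (0 : ℤ)), s)
    ((Finset.range s).image fun i : ℕ => ((((i : ℕ) : ℤ), (s : ℤ)), 1))

/-- One s×s tile at (0,1) with s unit tiles in the bottom row. -/
def blockBig1 (s : ℕ) : Finset ((ℤ × ℤ) × ℕ) :=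
  insert (((0 : ℤ), (1 : ℤ)), s)
    ((Finset.range s).image fun i : ℕ => ((((i : ℕ) : ℤ), (0 : ℤ)), 1))

lemma mem_sqCells {p q : ℤ × ℤ} {k : ℕ} :
    q ∈ sqCells p k ↔ p.1 ≤ q.1 ∧ q.1 < p.1 + k ∧ p.2 ≤ q.2 ∧ q.2 < p.2 + k := by
  simp only [sqCells, Finset.mem_image, Finset.mem_product, Finset.mem_range, Prod.exists]
  constructor
  · rintro ⟨i, j, ⟨hi, hj⟩, rfl⟩
    simp; try omega
  · rintro ⟨h1, h2, h3, h4⟩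
    refine ⟨(q.1 - p.1).toNat, (q.2 - p.2).toNat, ⟨by omega, by omega⟩, ?_⟩
    have : ((q.1 - p.1).toNat : ℤ) = q.1 - p.1 := by omega
    have : ((q.2 - p.2).toNat : ℤ) = q.2 - p.2 := by omega
    ext <;> simp <;> try omega

lemma mem_rectRegion {q : ℤ × ℤ} {a b : ℕ} :
    q ∈ rectRegion a b ↔ 0 ≤ q.1 ∧ q.1 < a ∧ 0 ≤ q.2 ∧ q.2 < b := by
  simp only [rectRegion, Finset.mem_image, Finset.mem_product, Finset.mem_range, Prod.exists]
  constructor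
  · rintro ⟨i, j, ⟨hi, hj⟩, rfl⟩; simp; try omega
  · rintro ⟨h1, h2, h3, h4⟩
    refine ⟨q.1.toNat, q.2.toNat, ⟨by omega, by omega⟩, ?_⟩
    ext <;> simp <;> try omega

lemma sqCells_one (p : ℤ × ℤ) : sqCells p 1 = {p} := by
  ext q; simp [mem_sqCells, Prod.ext_iff]; omega

lemma card_sqCells (p : ℤ × ℤ) (k : ℕ) : (sqCells p k).card = k * k := by
  rw [sqCells, Finset.card_image_of_injective, Finset.card_product, Finset.card_range]
  intro a b h
  simp only [Prod.mk.injEq] at h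
  ext <;> omega

lemma card_rectRegion (a b : ℕ) : (rectRegion a b).card = a * b := by
  rw [rectRegion, Finset.card_image_of_injective, Finset.card_product, Finset.card_range, Finset.card_range]
  intro x y h
  simp only [Prod.mk.injEq, Nat.cast_inj] at h
  ext <;> omega


lemma isTiling_blockUnits (s : ℕ) : IsTiling 1 s (rectRegion s (s + 1)) (blockUnits s) := by
  refine ⟨?_, ?_, ?_⟩
  · intro t ht
    simp only [blockUnits, Finset.mem_image] at ht
    obtain ⟨q, _, rfl⟩ := ht
    exact Or.inl rfl
  · intro t ht t' ht' hne
    simp only [blockUnits, Finset.mem_image] at ht ht'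
    obtain ⟨q, _, rfl⟩ := ht
    obtain ⟨q', _, rfl⟩ := ht'
    rw [sqCells_one, sqCells_one, Finset.disjoint_singleton]
    intro h; exact hne (by rw [show q = q' from h])
  · ext q
    simp only [Finset.mem_biUnion, blockUnits, Finset.mem_image]
    constructor
    · rintro ⟨t, ⟨q', hq', rfl⟩, hq⟩
      rw [sqCells_one, Finset.mem_singleton] at hq
      rwa [hq]
    · intro hq
      exact ⟨(q, 1), ⟨q, hq, rfl⟩, by rw [sqCells_one]; exact Finset.mem_singleton_self q⟩

lemma mem_blockBig0 {s : ℕ} {t : (ℤ × ℤ) × ℕ} :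
    t ∈ blockBig0 s ↔ t = (((0:ℤ), (0:ℤ)), s) ∨ ∃ i < s, t = ((((i:ℕ):ℤ), (s:ℤ)), 1) := by
  simp [blockBig0, eq_comm]

lemma mem_blockBig1 {s : ℕ} {t : (ℤ × ℤ) × ℕ} :
    t ∈ blockBig1 s ↔ t = (((0:ℤ), (1:ℤ)), s) ∨ ∃ i < s, t = ((((i:ℕ):ℤ), (0:ℤ)), 1) := by
  simp [blockBig1, eq_comm]

lemma isTiling_blockBig0 (s : ℕ) (hs : 2 ≤ s) :
    IsTiling 1 s (rectRegion s (s + 1)) (blockBig0 s) := by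
  refine ⟨?_, ?_, ?_⟩
  · intro t ht
    rcases mem_blockBig0.1 ht with rfl | ⟨i, hi, rfl⟩
    · exact Or.inr rfl
    · exact Or.inl rfl
  · intro t ht t' ht' hne
    rcases mem_blockBig0.1 ht with rfl | ⟨i, hi, rfl⟩ <;>
      rcases mem_blockBig0.1 ht' with rfl | ⟨j, hj, rfl⟩
    · exact absurd rfl hne
    · rw [sqCells_one, Finset.disjoint_singleton_right, mem_sqCells]
      simp; try omega
    · rw [sqCells_one, Finset.disjoint_singleton_left, mem_sqCells]
      simp; try omega
    · rw [sqCells_one, sqCells_one, Finset.disjoint_singleton]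
      intro h
      exact hne (by simp_all)
  · ext q
    simp only [Finset.mem_biUnion, mem_rectRegion]
    constructor
    · rintro ⟨t, ht, hq⟩
      rcases mem_blockBig0.1 ht with rfl | ⟨i, hi, rfl⟩ <;>
        simp only [mem_sqCells, sqCells_one, Finset.mem_singleton] at hq
      · simp at hq ⊢; try omega
      · subst hq; simp; try omega
    · rintro ⟨h1, h2, h3, h4⟩
      by_cases hy : q.2 < s
      · refine ⟨(((0:ℤ),(0:ℤ)), s), mem_blockBig0.2 (Or.inl rfl), ?_⟩
        rw [mem_sqCells]; simp; try omega
      · refine ⟨(((q.1.toNat : ℤ), (s:ℤ)), 1), mem_blockBig0.2 (Or.inr ⟨q.1.toNat, by omega, rfl⟩), ?_⟩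
        rw [sqCells_one, Finset.mem_singleton]
        ext <;> simp <;> try omega

lemma isTiling_blockBig1 (s : ℕ) (hs : 2 ≤ s) :
    IsTiling 1 s (rectRegion s (s + 1)) (blockBig1 s) := by
  refine ⟨?_, ?_, ?_⟩
  · intro t ht
    rcases mem_blockBig1.1 ht with rfl | ⟨i, hi, rfl⟩
    · exact Or.inr rfl
    · exact Or.inl rfl
  · intro t ht t' ht' hne
    rcases mem_blockBig1.1 ht with rfl | ⟨i, hi, rfl⟩ <;>
      rcases mem_blockBig1.1 ht' with rfl | ⟨j, hj, rfl⟩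
    · exact absurd rfl hne
    · rw [sqCells_one, Finset.disjoint_singleton_right, mem_sqCells]
      simp; try omega
    · rw [sqCells_one, Finset.disjoint_singleton_left, mem_sqCells]
      simp; try omega
    · rw [sqCells_one, sqCells_one, Finset.disjoint_singleton]
      intro h
      exact hne (by simp_all)
  · ext q
    simp only [Finset.mem_biUnion, mem_rectRegion]
    constructor
    · rintro ⟨t, ht, hq⟩
      rcases mem_blockBig1.1 ht with rfl | ⟨i, hi, rfl⟩ <;>
        simp only [mem_sqCells, sqCells_one, Finset.mem_singleton] at hq
      · simp at hq ⊢; try omega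
      · subst hq; simp; try omega
    · rintro ⟨h1, h2, h3, h4⟩
      by_cases hy : 1 ≤ q.2
      · refine ⟨(((0:ℤ),(1:ℤ)), s), mem_blockBig1.2 (Or.inl rfl), ?_⟩
        rw [mem_sqCells]; simp; try omega
      · refine ⟨(((q.1.toNat : ℤ), (0:ℤ)), 1), mem_blockBig1.2 (Or.inr ⟨q.1.toNat, by omega, rfl⟩), ?_⟩
        rw [sqCells_one, Finset.mem_singleton]
        ext <;> simp <;> try omega

lemma classify (s : ℕ) (hs : 2 ≤ s) (T : Finset ((ℤ × ℤ) × ℕ))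
    (hT : IsTiling 1 s (rectRegion s (s + 1)) T) :
    T = blockUnits s ∨ T = blockBig0 s ∨ T = blockBig1 s := by
  obtain ⟨hsize, hdisj, hcover⟩ := hT
  have hcard : ∑ t ∈ T, t.2 * t.2 = s * (s + 1) := by
    calc ∑ t ∈ T, t.2 * t.2 = ∑ t ∈ T, (sqCells t.1 t.2).card :=
          Finset.sum_congr rfl fun t _ => (card_sqCells t.1 t.2).symm
      _ = (T.biUnion fun t => sqCells t.1 t.2).card := (Finset.card_biUnion hdisj).symm
      _ = s * (s + 1) := by rw [hcover, card_rectRegion]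
  set B := T.filter (fun t => t.2 = s) with hB
  have hBcard : B.card ≤ 1 := by
    by_contra h
    push_neg at h
    have hsum : B.card * (s * s) ≤ ∑ t ∈ T, t.2 * t.2 := by
      calc B.card * (s * s) = ∑ _t ∈ B, s * s := by rw [Finset.sum_const, smul_eq_mul]
        _ = ∑ t ∈ B, t.2 * t.2 :=
            Finset.sum_congr rfl fun t ht => by rw [(Finset.mem_filter.1 ht).2]
        _ ≤ ∑ t ∈ T, t.2 * t.2 := Finset.sum_le_sum_of_subset (Finset.filter_subset _ _)
    rw [hcard] at hsum
    nlinarith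
  have hcov : ∀ q ∈ rectRegion s (s + 1), ∃ t ∈ T, q ∈ sqCells t.1 t.2 := by
    intro q hq; rw [← hcover] at hq; exact Finset.mem_biUnion.1 hq
  have hmemR : ∀ t ∈ T, t.1 ∈ rectRegion s (s + 1) := by
    intro t ht
    rw [← hcover]
    refine Finset.mem_biUnion.2 ⟨t, ht, ?_⟩
    rcases hsize t ht with h | h <;> rw [h] <;> exact mem_sqCells.2 ⟨le_refl _, by omega, le_refl _, by omega⟩
  rcases Nat.le_one_iff_eq_zero_or_eq_one.1 hBcard with h0 | h1
  · -- no big tile: all units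
    left
    have hall : ∀ t ∈ T, t.2 = 1 := by
      intro t ht
      rcases hsize t ht with h | h
      · exact h
      · exfalso
        have hmem : t ∈ B := Finset.mem_filter.2 ⟨ht, h⟩
        rw [Finset.card_eq_zero.1 h0] at hmem
        exact absurd hmem (Finset.notMem_empty t)
    ext t
    simp only [blockUnits, Finset.mem_image]
    constructor
    · intro ht
      exact ⟨t.1, hmemR t ht, Prod.ext rfl (hall t ht).symm⟩
    · rintro ⟨q, hq, rfl⟩
      obtain ⟨t', ht', hqt⟩ := hcov q hq
      have h1' := hall t' ht'
      rw [h1', sqCells_one, Finset.mem_singleton] at hqt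
      have : (q, 1) = t' := Prod.ext hqt (h1').symm
      rwa [this]
  · -- exactly one big tile
    obtain ⟨t0, ht0⟩ := Finset.card_eq_one.1 h1
    have ht0B : t0 ∈ B := by rw [ht0]; exact Finset.mem_singleton_self t0
    have ht0T : t0 ∈ T := (Finset.mem_filter.1 ht0B).1
    have ht0s : t0.2 = s := (Finset.mem_filter.1 ht0B).2
    have huniq : ∀ t ∈ T, t.2 = s → t = t0 := by
      intro t ht hts
      have : t ∈ B := Finset.mem_filter.2 ⟨ht, hts⟩
      rw [ht0, Finset.mem_singleton] at this
      exact this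
    have hsub : sqCells t0.1 s ⊆ rectRegion s (s + 1) := by
      rw [← hcover]
      intro q hq
      exact Finset.mem_biUnion.2 ⟨t0, ht0T, by rw [ht0s]; exact hq⟩
    have hA := mem_rectRegion.1 (hsub (mem_sqCells.2
      ⟨le_refl _, by omega, le_refl _, by omega⟩ : t0.1 ∈ sqCells t0.1 s))
    have hC := mem_rectRegion.1 (hsub (mem_sqCells.2
      (by simp; omega) : (t0.1.1 + ((s : ℤ) - 1), t0.1.2 + ((s : ℤ) - 1)) ∈ sqCells t0.1 s))
    simp only at hC
    have hx : t0.1.1 = 0 := by omega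
    have hy : t0.1.2 = 0 ∨ t0.1.2 = 1 := by omega
    -- common facts
    rcases hy with hy | hy
    · -- big tile at (0,0): blockBig0
      right; left
      have ht0eq : t0 = (((0 : ℤ), (0 : ℤ)), s) := Prod.ext (Prod.ext hx hy) ht0s
      ext t
      constructor
      · intro ht
        rcases hsize t ht with h | h
        · -- unit tile: must be in top row
          have hne : t ≠ t0 := by intro he; rw [he, ht0s] at h; omega
          have hd := hdisj t ht t0 ht0T hne
          rw [h, sqCells_one, Finset.disjoint_singleton_left, ht0eq] at hd
          have hR := mem_rectRegion.1 (hmemR t ht)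
          rw [mem_sqCells] at hd
          simp only at hd
          have hy2 : t.1.2 = s := by omega
          refine mem_blockBig0.2 (Or.inr ⟨t.1.1.toNat, by omega, ?_⟩)
          refine (Prod.ext (Prod.ext (by simp; omega) (by simp; omega)) h.symm).symm
        · rw [huniq t ht h, ht0eq]
          exact mem_blockBig0.2 (Or.inl rfl)
      · intro ht
        rcases mem_blockBig0.1 ht with rfl | ⟨i, hi, rfl⟩
        · rwa [← ht0eq]
        · have hq : ((i : ℤ), (s : ℤ)) ∈ rectRegion s (s + 1) := mem_rectRegion.2 (by simp; omega)
          obtain ⟨t', ht', hqt⟩ := hcov _ hq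
          rcases hsize t' ht' with h | h
          · rw [h, sqCells_one, Finset.mem_singleton] at hqt
            have : (((i : ℤ), (s : ℤ)), 1) = t' := Prod.ext hqt h.symm
            rwa [this]
          · exfalso
            rw [huniq t' ht' h, ht0eq] at hqt
            rw [mem_sqCells] at hqt
            simp only at hqt
            omega
    · -- big tile at (0,1): blockBig1
      right; right
      have ht0eq : t0 = (((0 : ℤ), (1 : ℤ)), s) := Prod.ext (Prod.ext hx hy) ht0s
      ext t
      constructor
      · intro ht
        rcases hsize t ht with h | h
        · have hne : t ≠ t0 := by intro he; rw [he, ht0s] at h; omega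
          have hd := hdisj t ht t0 ht0T hne
          rw [h, sqCells_one, Finset.disjoint_singleton_left, ht0eq] at hd
          have hR := mem_rectRegion.1 (hmemR t ht)
          rw [mem_sqCells] at hd
          simp only at hd
          have hy2 : t.1.2 = 0 := by omega
          refine mem_blockBig1.2 (Or.inr ⟨t.1.1.toNat, by omega, ?_⟩)
          refine (Prod.ext (Prod.ext (by simp; omega) (by simp; omega)) h.symm).symm
        · rw [huniq t ht h, ht0eq]
          exact mem_blockBig1.2 (Or.inl rfl)
      · intro ht
        rcases mem_blockBig1.1 ht with rfl | ⟨i, hi, rfl⟩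
        · rwa [← ht0eq]
        · have hq : ((i : ℤ), (0 : ℤ)) ∈ rectRegion s (s + 1) := mem_rectRegion.2 (by simp; omega)
          obtain ⟨t', ht', hqt⟩ := hcov _ hq
          rcases hsize t' ht' with h | h
          · rw [h, sqCells_one, Finset.mem_singleton] at hqt
            have : (((i : ℤ), (0 : ℤ)), 1) = t' := Prod.ext hqt h.symm
            rwa [this]
          · exfalso
            rw [huniq t' ht' h, ht0eq] at hqt
            rw [mem_sqCells] at hqt
            simp only at hqt
            omega

/-- The s×(s+1) rectangle (the horizontal/vertical block for (1,s)-tilings) has exactly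
three (1,s)-tilings: the all-unit tiling, the tiling with one s×s tile at (0,0) and s
unit tiles in the top row, and the tiling with one s×s tile at (0,1) and s unit tiles in
the bottom row. -/
theorem block_has_three_tilings (s : ℕ) (hs : 2 ≤ s) :
    {T | IsTiling 1 s (rectRegion s (s + 1)) T} =
      {blockUnits s, blockBig0 s, blockBig1 s} := by
  ext T
  simp only [Set.mem_setOf_eq, Set.mem_insert_iff, Set.mem_singleton_iff]
  constructor
  · exact classify s hs T
  · rintro (rfl | rfl | rfl)
    exacts [isTiling_blockUnits s, isTiling_blockBig0 s hs, isTiling_blockBig1 s hs]
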